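/- Let μ_1,…,μ_K ∈ ℝ, σ > 0, and λ_1,…,λ_K ≥ 0 with Σ_k λ_k = 1. Then the Gaussian distribution 𝒩(Σ_k λ_kμ_k, σ²) is a 2-Wasserstein barycenter of the Gaussian distributions 𝒩(μ_1,σ²),…,𝒩(μ_K,σ²) with weights λ_1,…,λ_K; that is, it minimizes Σ_k λ_k W_2(P, 𝒩(μ_k,σ²))² over all Borel probability measures P on ℝ with finite second moment. -/

import Mathlib

open MeasureTheory ProbabilityTheory ENNReal

noncomputable section

/-- `π` is a coupling of the probability measures `P` and `Q`. -/
def IsCoupling {X : Type*} [MeasurableSpace X]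
    (π : Measure (X × X)) (P Q : Measure X) : Prop :=
  IsProbabilityMeasure π ∧ π.map Prod.fst = P ∧ π.map Prod.snd = Q

/-- Squared 2-Wasserstein distance `W₂(P,Q)²` between probability measures on `ℝ`. -/
def W2sq (P Q : Measure ℝ) : ℝ≥0∞ :=
  ⨅ π ∈ {π : Measure (ℝ × ℝ) | IsCoupling π P Q},
    ∫⁻ q, ENNReal.ofReal ((q.1 - q.2) ^ 2) ∂π

lemma integrable_id_gaussianReal (b : ℝ) (v : NNReal) :
    Integrable id (gaussianReal b v) := by
  by_cases hv : v = 0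
  · refine ⟨aestronglyMeasurable_id, ?_⟩
    rw [hasFiniteIntegral_def, hv, gaussianReal_zero_var,
      lintegral_dirac' _ (by fun_prop : Measurable fun a : ℝ => ‖id a‖ₑ)]
    exact enorm_lt_top
  rw [gaussianReal_of_var_ne_zero _ hv]
  have hmeas : Measurable (gaussianPDF b v) := measurable_gaussianPDF b v
  rw [integrable_withDensity_iff hmeas (ae_of_all _ fun x => ofReal_lt_top)]
  simp only [id_eq]
  have heq : (fun x : ℝ => x * (gaussianPDF b v x).toReal)
      = fun x : ℝ => (√(2 * Real.pi * v))⁻¹ * (x * Real.exp (-(x - b) ^ 2 / (2 * v))) := by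
    ext x
    rw [gaussianPDF, toReal_ofReal (gaussianPDFReal_nonneg b v x), gaussianPDFReal]
    ring
  rw [heq]
  refine Integrable.const_mul ?_ _
  have hv' : (0 : ℝ) < (2 * (v : ℝ))⁻¹ := by
    have : (0 : ℝ) < (v : ℝ) := lt_of_le_of_ne (v.coe_nonneg) (by exact_mod_cast (Ne.symm hv))
    positivity
  have h1 : Integrable (fun x : ℝ => (x + b) * Real.exp (-(2 * (v : ℝ))⁻¹ * x ^ 2)) := by
    have h2 : Integrable (fun x : ℝ => x * Real.exp (-(2 * (v : ℝ))⁻¹ * x ^ 2)) :=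
      integrable_mul_exp_neg_mul_sq hv'
    have h3 : Integrable (fun x : ℝ => b * Real.exp (-(2 * (v : ℝ))⁻¹ * x ^ 2)) :=
      (integrable_exp_neg_mul_sq hv').const_mul b
    have := h2.add h3
    convert this using 1
    · rfl
    ext x
    simp only [Pi.add_apply]
    ring_nf
  have := h1.comp_sub_right b
  convert this using 1
  · rfl
  ext x
  simp only [sub_add_cancel]
  congr 1
  field_simp

lemma integral_id_gaussianReal (b : ℝ) (v : NNReal) :
    ∫ x, x ∂(gaussianReal b v) = b := by
  by_cases hv : v = 0
  · simp [hv, integral_dirac]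
  have hzero : ∫ x, x ∂(gaussianReal 0 v) = 0 := by
    have hmap : (gaussianReal 0 v).map (fun x => (-1 : ℝ) * x) = gaussianReal 0 v := by
      rw [gaussianReal_map_const_mul]
      congr 1
      · norm_num
      · ext
        simp
    have h1 : ∫ x, x ∂(gaussianReal 0 v) = ∫ x, (-1 : ℝ) * x ∂(gaussianReal 0 v) := by
      have h1' : ∫ x, x ∂((gaussianReal 0 v).map (fun x => (-1 : ℝ) * x))
          = ∫ x, (-1 : ℝ) * x ∂(gaussianReal 0 v) :=
        integral_map (by fun_prop) aestronglyMeasurable_id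
      rw [hmap] at h1'
      exact h1'.symm ▸ h1'
    have h2 : ∫ x, (-1 : ℝ) * x ∂(gaussianReal 0 v) = -∫ x, x ∂(gaussianReal 0 v) := by
      simp only [neg_one_mul]
      exact integral_neg _
    linarith [h1, h2.symm ▸ h1]
  have hmap : (gaussianReal 0 v).map (· + b) = gaussianReal b v := by
    rw [gaussianReal_map_add_const, zero_add]
  have h' : ∫ x, x ∂((gaussianReal 0 v).map (· + b)) = ∫ x, x + b ∂(gaussianReal 0 v) :=
    integral_map (by fun_prop) aestronglyMeasurable_id
  rw [hmap] at h'
  have hint : Integrable (fun x : ℝ => x) (gaussianReal 0 v) := integrable_id_gaussianReal 0 v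
  rw [h', integral_add hint (integrable_const b), hzero, integral_const]
  simp

lemma W2sq_gaussian_le (a b : ℝ) (v : NNReal) :
    W2sq (gaussianReal a v) (gaussianReal b v) ≤ ENNReal.ofReal ((a - b) ^ 2) := by
  set π : Measure (ℝ × ℝ) := (gaussianReal a v).map (fun x => (x, x + (b - a))) with hπdef
  have hm : Measurable (fun x : ℝ => (x, x + (b - a))) := by fun_prop
  have hcoup : IsCoupling π (gaussianReal a v) (gaussianReal b v) := by
    refine ⟨Measure.isProbabilityMeasure_map hm.aemeasurable, ?_, ?_⟩
    · rw [hπdef, Measure.map_map measurable_fst hm]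
      have : (Prod.fst ∘ fun x : ℝ => (x, x + (b - a))) = id := rfl
      rw [this, Measure.map_id]
    · rw [hπdef, Measure.map_map measurable_snd hm]
      have : (Prod.snd ∘ fun x : ℝ => (x, x + (b - a))) = (· + (b - a)) := rfl
      rw [this, gaussianReal_map_add_const]
      congr 1
      ring
  have hval : ∫⁻ q, ENNReal.ofReal ((q.1 - q.2) ^ 2) ∂π = ENNReal.ofReal ((a - b) ^ 2) := by
    rw [hπdef, lintegral_map (by fun_prop) hm]
    have : ∀ x : ℝ, ENNReal.ofReal ((x - (x + (b - a))) ^ 2) = ENNReal.ofReal ((a - b) ^ 2) := by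
      intro x; congr 1; ring
    simp only [this]
    simp
  calc W2sq (gaussianReal a v) (gaussianReal b v)
      ≤ ∫⁻ q, ENNReal.ofReal ((q.1 - q.2) ^ 2) ∂π := iInf₂_le π hcoup
    _ = ENNReal.ofReal ((a - b) ^ 2) := hval

lemma integrable_id_of_sq_lintegral {P : Measure ℝ} [IsProbabilityMeasure P]
    (hP : ∫⁻ x, ENNReal.ofReal (x ^ 2) ∂P < ⊤) : Integrable id P := by
  refine ⟨aestronglyMeasurable_id, ?_⟩
  rw [hasFiniteIntegral_def]
  calc ∫⁻ x, (‖x‖₊ : ℝ≥0∞) ∂P ≤ ∫⁻ x, ENNReal.ofReal (x ^ 2) + 1 ∂P := by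
        refine lintegral_mono fun x => ?_
        have h1 : (‖x‖₊ : ℝ≥0∞) = ENNReal.ofReal |x| := by
          exact Real.enorm_eq_ofReal_abs x
        rw [h1]
        have h2 : |x| ≤ x ^ 2 + 1 := by nlinarith [sq_nonneg (|x| - 1), sq_abs x, abs_nonneg x]
        calc ENNReal.ofReal |x| ≤ ENNReal.ofReal (x ^ 2 + 1) := ENNReal.ofReal_le_ofReal h2
          _ = ENNReal.ofReal (x ^ 2) + 1 := by
              rw [ENNReal.ofReal_add (sq_nonneg x) zero_le_one, ENNReal.ofReal_one]
    _ = (∫⁻ x, ENNReal.ofReal (x ^ 2) ∂P) + 1 := by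
        rw [lintegral_add_right _ measurable_const, lintegral_const, measure_univ, mul_one]
    _ < ⊤ := by
        exact ENNReal.add_lt_top.mpr ⟨hP, one_lt_top⟩

lemma le_W2sq_gaussian {P : Measure ℝ} [IsProbabilityMeasure P]
    (hP : ∫⁻ x, ENNReal.ofReal (x ^ 2) ∂P < ⊤) (b : ℝ) (v : NNReal) :
    ENNReal.ofReal (((∫ x, x ∂P) - b) ^ 2) ≤ W2sq P (gaussianReal b v) := by
  refine le_iInf₂ fun π hπ => ?_
  obtain ⟨hprob, hfst, hsnd⟩ := hπ
  by_cases htop : ∫⁻ q, ENNReal.ofReal ((q.1 - q.2) ^ 2) ∂π = ⊤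
  · rw [htop]; exact le_top
  haveI : IsProbabilityMeasure π := hprob
  set f : ℝ × ℝ → ℝ := fun q => q.1 - q.2 with hf
  have hfmeas : Measurable f := by fun_prop
  -- f^2 is integrable
  have hsq : Integrable (fun q => f q ^ 2) π := by
    refine ⟨(hfmeas.pow_const 2).aestronglyMeasurable, ?_⟩
    rw [hasFiniteIntegral_def]
    have : ∀ q : ℝ × ℝ, ‖f q ^ 2‖ₑ = ENNReal.ofReal ((q.1 - q.2) ^ 2) := fun q => by
      rw [Real.enorm_eq_ofReal (sq_nonneg _)]
    simp only [this]
    exact lt_top_iff_ne_top.mpr htop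
  have hmem : MemLp f 2 π :=
    (memLp_two_iff_integrable_sq hfmeas.aestronglyMeasurable).mpr hsq
  -- first coordinate integrable
  have hP1 : Integrable id P := integrable_id_of_sq_lintegral hP
  have hfst' : Integrable (fun q : ℝ × ℝ => q.1) π := by
    have := (integrable_map_measure (f := Prod.fst) (g := id)
      (by rw [hfst]; exact aestronglyMeasurable_id) measurable_fst.aemeasurable).mp
      (by rw [hfst]; exact hP1)
    exact this
  have hsnd' : Integrable (fun q : ℝ × ℝ => q.2) π := by
    have := (integrable_map_measure (f := Prod.snd) (g := id)
      (by rw [hsnd]; exact aestronglyMeasurable_id) measurable_snd.aemeasurable).mp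
      (by rw [hsnd]; exact integrable_id_gaussianReal b v)
    exact this
  have hE1 : ∫ q : ℝ × ℝ, q.1 ∂π = ∫ x, x ∂P := by
    have h1' : ∫ x, x ∂(π.map Prod.fst) = ∫ q : ℝ × ℝ, q.1 ∂π :=
      integral_map measurable_fst.aemeasurable aestronglyMeasurable_id
    rw [← h1', hfst]
  have hE2 : ∫ q : ℝ × ℝ, q.2 ∂π = b := by
    have h2' : ∫ x, x ∂(π.map Prod.snd) = ∫ q : ℝ × ℝ, q.2 ∂π :=
      integral_map measurable_snd.aemeasurable aestronglyMeasurable_id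
    rw [← h2', hsnd]
    exact integral_id_gaussianReal b v
  have hEf : ∫ q, f q ∂π = (∫ x, x ∂P) - b := by
    rw [hf]
    simp only
    rw [integral_sub hfst' hsnd', hE1, hE2]
  -- variance inequality
  have hvar : (∫ q, f q ∂π) ^ 2 ≤ ∫ q, f q ^ 2 ∂π := by
    have h := variance_nonneg f π
    rw [variance_eq_sub hmem] at h
    have : (∫ q, (f ^ 2) q ∂π) = ∫ q, f q ^ 2 ∂π := by rfl
    linarith [h, this ▸ h]
  calc ENNReal.ofReal (((∫ x, x ∂P) - b) ^ 2)
      = ENNReal.ofReal ((∫ q, f q ∂π) ^ 2) := by rw [hEf]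
    _ ≤ ENNReal.ofReal (∫ q, f q ^ 2 ∂π) := ENNReal.ofReal_le_ofReal hvar
    _ = ∫⁻ q, ENNReal.ofReal ((q.1 - q.2) ^ 2) ∂π := by
        rw [ofReal_integral_eq_lintegral_ofReal hsq (ae_of_all _ fun q => sq_nonneg _)]

/-- **the Gaussian with averaged mean is a 2-Wasserstein barycenter of
Gaussians with common variance.** -/
theorem gaussian_barycenter
    {K : ℕ} (μ : Fin K → ℝ) (σ : ℝ) (hσ : 0 < σ)
    (lam : Fin K → ℝ) (hlam : ∀ k, 0 ≤ lam k) (hsum : ∑ k, lam k = 1) :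
    ∀ P : Measure ℝ, IsProbabilityMeasure P →
      (∫⁻ x, ENNReal.ofReal (x ^ 2) ∂P < ⊤) →
      ∑ k, ENNReal.ofReal (lam k) *
          W2sq (gaussianReal (∑ k', lam k' * μ k') (Real.toNNReal (σ ^ 2)))
            (gaussianReal (μ k) (Real.toNNReal (σ ^ 2)))
        ≤ ∑ k, ENNReal.ofReal (lam k) *
            W2sq P (gaussianReal (μ k) (Real.toNNReal (σ ^ 2))) := by
  intro P hPprob hPsq
  haveI := hPprob
  set v : NNReal := Real.toNNReal (σ ^ 2)
  set μbar : ℝ := ∑ k', lam k' * μ k'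
  set m : ℝ := ∫ x, x ∂P
  -- real inequality
  have hreal : ∑ k, lam k * (μbar - μ k) ^ 2 ≤ ∑ k, lam k * (m - μ k) ^ 2 := by
    have hexp : ∀ k, lam k * (m - μ k) ^ 2
        = lam k * (μbar - μ k) ^ 2 + (2 * (m - μbar) * (lam k * (μbar - μ k))
          + (m - μbar) ^ 2 * lam k) := fun k => by ring
    have hsum2 : ∑ k, lam k * (μbar - μ k) = 0 := by
      have : ∑ k, lam k * (μbar - μ k) = (∑ k, lam k) * μbar - ∑ k, lam k * μ k := by
        rw [Finset.sum_mul]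
        rw [← Finset.sum_sub_distrib]
        congr 1
        ext k
        ring
      rw [this, hsum, one_mul]
      simp [μbar]
    calc ∑ k, lam k * (μbar - μ k) ^ 2
        ≤ ∑ k, lam k * (μbar - μ k) ^ 2 + (m - μbar) ^ 2 := le_add_of_nonneg_right (sq_nonneg _)
      _ = ∑ k, lam k * (m - μ k) ^ 2 := by
          simp only [hexp]
          rw [Finset.sum_add_distrib, Finset.sum_add_distrib, ← Finset.mul_sum, hsum2,
            ← Finset.mul_sum, hsum]
          ring
  calc ∑ k, ENNReal.ofReal (lam k) * W2sq (gaussianReal μbar v) (gaussianReal (μ k) v)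
      ≤ ∑ k, ENNReal.ofReal (lam k) * ENNReal.ofReal ((μbar - μ k) ^ 2) := by
        refine Finset.sum_le_sum fun k _ => ?_
        exact mul_le_mul_right (W2sq_gaussian_le _ _ _) _
    _ = ENNReal.ofReal (∑ k, lam k * (μbar - μ k) ^ 2) := by
        rw [ENNReal.ofReal_sum_of_nonneg fun k _ => mul_nonneg (hlam k) (sq_nonneg _)]
        refine Finset.sum_congr rfl fun k _ => ?_
        rw [ENNReal.ofReal_mul (hlam k)]
    _ ≤ ENNReal.ofReal (∑ k, lam k * (m - μ k) ^ 2) := ENNReal.ofReal_le_ofReal hreal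
    _ = ∑ k, ENNReal.ofReal (lam k) * ENNReal.ofReal ((m - μ k) ^ 2) := by
        rw [ENNReal.ofReal_sum_of_nonneg fun k _ => mul_nonneg (hlam k) (sq_nonneg _)]
        refine Finset.sum_congr rfl fun k _ => ?_
        rw [ENNReal.ofReal_mul (hlam k)]
    _ ≤ ∑ k, ENNReal.ofReal (lam k) * W2sq P (gaussianReal (μ k) v) := by
        refine Finset.sum_le_sum fun k _ => ?_
        exact mul_le_mul_right (le_W2sq_gaussian hPsq (μ k) v) _

end
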